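/- arXiv:2408.08725 — 2 statements merged into one kernel-verified Lean document; each statement's English description precedes it below -/
import Mathlib

section
/- Mellin transform of the scaled cosine: for real a > 0 and real s with 0 < s < 1, the improper integral ∫₀^∞ x^{s-1} cos(a·x) dx converges and equals a^{-s} · Γ(s) · cos(π s / 2). -/
open Filter Topology MeasureTheory Real Set intervalIntegral

-- H1: integrability of t^p * exp(-(r*t)) on Ioi 0
lemma mc_integrableOn_rpow_mul_exp {p r : ℝ} (hp : -1 < p) (hr : 0 < r) :
    IntegrableOn (fun t : ℝ => t ^ p * Real.exp (-(r * t))) (Ioi 0) := by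
  have h0 : IntegrableOn (fun t : ℝ => Real.exp (-t) * t ^ p) (Ioi 0) := by
    have := Real.GammaIntegral_convergent (s := p + 1) (by linarith)
    simpa using this
  have h1 : IntegrableOn (fun x : ℝ => Real.exp (-(r * x)) * (r * x) ^ p) (Ioi 0) := by
    have := (MeasureTheory.integrableOn_Ioi_comp_mul_left_iff
      (fun t => Real.exp (-t) * t ^ p) 0 hr).mpr (by simpa using h0)
    simpa using this
  have h2 : IntegrableOn (fun x : ℝ => (r ^ p)⁻¹ * (Real.exp (-(r * x)) * (r * x) ^ p)) (Ioi 0) :=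
    h1.const_mul (r ^ p)⁻¹
  refine h2.congr_fun (fun x hx => ?_) measurableSet_Ioi
  have hx0 : (0:ℝ) < x := hx
  dsimp only
  rw [Real.mul_rpow hr.le hx0.le]
  field_simp [(Real.rpow_pos_of_pos hr p).ne']

-- H2: value
lemma mc_integral_rpow_mul_exp {p r : ℝ} (hp : 0 < p) (hr : 0 < r) :
    ∫ t in Ioi (0:ℝ), t ^ (p - 1) * Real.exp (-(r * t)) = r ^ (-p) * Real.Gamma p := by
  rw [Real.integral_rpow_mul_exp_neg_mul_Ioi hp hr, one_div, Real.inv_rpow hr.le,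
    Real.rpow_neg hr.le]

-- H3: antiderivative
lemma mc_hasDerivAt (t a x : ℝ) :
    HasDerivAt (fun x => Real.exp (-(t*x)) * (a * Real.sin (a*x) - t * Real.cos (a*x)))
      ((t^2 + a^2) * (Real.exp (-(t*x)) * Real.cos (a*x))) x := by
  have he : HasDerivAt (fun x : ℝ => Real.exp (-(t*x))) (-t * Real.exp (-(t*x))) x := by
    have h1 : HasDerivAt (fun x : ℝ => -(t*x)) (-t) x := by
      simpa using (hasDerivAt_id x).const_mul (-t)
    simpa [mul_comm] using h1.exp
  have hs : HasDerivAt (fun x : ℝ => Real.sin (a*x)) (a * Real.cos (a*x)) x := by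
    have h1 : HasDerivAt (fun x : ℝ => a*x) a x := by simpa using (hasDerivAt_id x).const_mul a
    simpa [mul_comm] using h1.sin
  have hc : HasDerivAt (fun x : ℝ => Real.cos (a*x)) (-(a * Real.sin (a*x))) x := by
    have h1 : HasDerivAt (fun x : ℝ => a*x) a x := by simpa using (hasDerivAt_id x).const_mul a
    have := h1.cos
    simpa [mul_comm] using this
  have h2 : HasDerivAt (fun x => a * Real.sin (a*x) - t * Real.cos (a*x))
      (a * (a * Real.cos (a*x)) - t * (-(a * Real.sin (a*x)))) x :=
    (hs.const_mul a).sub (hc.const_mul t)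
  have := he.mul h2
  refine this.congr_deriv ?_
  ring

-- H3': evaluated integral
lemma mc_integral_exp_cos (t a : ℝ) (h : 0 < t ^ 2 + a ^ 2) (T : ℝ) :
    ∫ x in (0:ℝ)..T, Real.exp (-(t*x)) * Real.cos (a*x)
      = (t + Real.exp (-(t*T)) * (a * Real.sin (a*T) - t * Real.cos (a*T))) / (t^2+a^2) := by
  have := intervalIntegral.integral_eq_sub_of_hasDerivAt
    (f := fun x => Real.exp (-(t*x)) * (a * Real.sin (a*x) - t * Real.cos (a*x)) / (t^2+a^2))
    (f' := fun x => Real.exp (-(t*x)) * Real.cos (a*x)) (a := 0) (b := T)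
    (fun x _ => by
      have := (mc_hasDerivAt t a x).div_const (t^2+a^2)
      simpa [mul_div_assoc, mul_div_cancel_left₀ _ h.ne'] using this)
    (by apply Continuous.intervalIntegrable; continuity)
  rw [this]
  simp only [mul_zero, neg_zero, Real.exp_zero, Real.sin_zero, Real.cos_zero]
  ring


-- H4: uniform bound
lemma mc_bound {a t T : ℝ} (ha : 0 < a) (ht : 0 < t) (hT : 0 ≤ T) :
    |(t + Real.exp (-(t*T)) * (a * Real.sin (a*T) - t * Real.cos (a*T))) / (t^2+a^2)|
      ≤ (2*t+a) / (t^2+a^2) := by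
  have hden : (0:ℝ) < t^2+a^2 := by positivity
  rw [abs_div, abs_of_pos hden, div_le_div_iff_of_pos_right hden]
  have he : Real.exp (-(t*T)) ≤ 1 := Real.exp_le_one_iff.mpr (by nlinarith)
  have he0 : (0:ℝ) ≤ Real.exp (-(t*T)) := (Real.exp_pos _).le
  have h1 : |a * Real.sin (a*T) - t * Real.cos (a*T)| ≤ a + t := by
    calc |a * Real.sin (a*T) - t * Real.cos (a*T)|
        ≤ |a * Real.sin (a*T)| + |t * Real.cos (a*T)| := abs_sub _ _
      _ ≤ a * 1 + t * 1 := by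
          gcongr
          · rw [abs_mul, abs_of_pos ha]; exact mul_le_mul_of_nonneg_left (Real.abs_sin_le_one _) ha.le
          · rw [abs_mul, abs_of_pos ht]; exact mul_le_mul_of_nonneg_left (Real.abs_cos_le_one _) ht.le
      _ = a + t := by ring
  calc |t + Real.exp (-(t*T)) * (a * Real.sin (a*T) - t * Real.cos (a*T))|
      ≤ |t| + |Real.exp (-(t*T)) * (a * Real.sin (a*T) - t * Real.cos (a*T))| := abs_add_le _ _
    _ ≤ t + 1 * (a + t) := by
        gcongr
        · exact le_of_eq (abs_of_pos ht)
        · rw [abs_mul, abs_of_nonneg he0]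
          exact mul_le_mul he (h1) (abs_nonneg _) zero_le_one
    _ = 2*t+a := by ring

-- H5: pointwise limit
lemma mc_ptlimit {a t : ℝ} (ha : 0 < a) (ht : 0 < t) :
    Tendsto (fun T : ℝ => (t + Real.exp (-(t*T)) * (a * Real.sin (a*T) - t * Real.cos (a*T))) / (t^2+a^2))
      atTop (𝓝 (t / (t^2+a^2))) := by
  have h0 : Tendsto (fun T : ℝ => Real.exp (-(t*T)) * (a * Real.sin (a*T) - t * Real.cos (a*T)))
      atTop (𝓝 0) := by
    apply squeeze_zero_norm (a := fun T => Real.exp (-(t*T)) * (a + t))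
    · intro T
      rw [norm_mul, Real.norm_eq_abs, Real.norm_eq_abs, abs_of_pos (Real.exp_pos _)]
      gcongr
      calc |a * Real.sin (a*T) - t * Real.cos (a*T)|
          ≤ |a * Real.sin (a*T)| + |t * Real.cos (a*T)| := abs_sub _ _
        _ ≤ a * 1 + t * 1 := by
            gcongr
            · rw [abs_mul, abs_of_pos ha]; exact mul_le_mul_of_nonneg_left (Real.abs_sin_le_one _) ha.le
            · rw [abs_mul, abs_of_pos ht]; exact mul_le_mul_of_nonneg_left (Real.abs_cos_le_one _) ht.le
        _ = a + t := by ring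
    · have hneg : Tendsto (fun T : ℝ => -(t*T)) atTop atBot := by
        have := (Filter.tendsto_const_mul_atTop_of_pos ht).mpr (tendsto_id (α := ℝ))
        exact tendsto_neg_atTop_atBot.comp this
      have := (Real.tendsto_exp_atBot.comp hneg).mul_const (a+t)
      simpa using this
  have := ((tendsto_const_nhds (x := t) (f := atTop)).add h0).div_const (t^2+a^2)
  simpa using this


-- continuity helper
lemma mc_contOn (s : ℝ) : ContinuousOn (fun t : ℝ => t ^ (-s)) (Ioi 0) :=
  continuousOn_id.rpow_const (fun t ht => Or.inl (ne_of_gt ht))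

-- H6: dominating function integrable
lemma mc_dom_integrable {a s : ℝ} (ha : 0 < a) (hs0 : 0 < s) (hs1 : s < 1) :
    IntegrableOn (fun t : ℝ => t ^ (-s) * ((2*t+a) / (t^2+a^2))) (Ioi 0) := by
  have hsplit : Ioi (0:ℝ) = Ioc 0 1 ∪ Ioi 1 := (Ioc_union_Ioi_eq_Ioi zero_le_one).symm
  have hcont : ContinuousOn (fun t : ℝ => t ^ (-s) * ((2*t+a) / (t^2+a^2))) (Ioi 0) := by
    apply (mc_contOn s).mul
    apply ContinuousOn.div (by fun_prop) (by fun_prop)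
    intro t ht
    have : (0:ℝ) < t := ht
    positivity
  rw [hsplit, integrableOn_union]
  constructor
  · apply Integrable.mono' (g := fun t => ((2+a)/a^2) * t ^ (-s))
    · apply Integrable.const_mul
      have h1 : IntervalIntegrable (fun t : ℝ => t ^ (-s)) volume 0 1 :=
        intervalIntegral.intervalIntegrable_rpow' (by linarith)
      exact (intervalIntegrable_iff_integrableOn_Ioc_of_le zero_le_one).mp h1
    · exact (hcont.mono (by rw [hsplit]; exact subset_union_left)).aestronglyMeasurable
        measurableSet_Ioc
    · filter_upwards [ae_restrict_mem measurableSet_Ioc] with t ht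
      obtain ⟨ht0, ht1⟩ := ht
      have hts : (0:ℝ) ≤ t ^ (-s) := Real.rpow_nonneg ht0.le _
      rw [Real.norm_eq_abs, abs_of_nonneg (by positivity), mul_comm]
      exact mul_le_mul_of_nonneg_right
        (by rw [div_le_div_iff₀ (by positivity) (by positivity)]; nlinarith) hts
  · apply Integrable.mono' (g := fun t => (2+a) * t ^ (-s-1))
    · exact (integrableOn_Ioi_rpow_of_lt (by linarith) one_pos).const_mul _
    · exact (hcont.mono (by rw [hsplit]; exact subset_union_right)).aestronglyMeasurable
        measurableSet_Ioi
    · filter_upwards [ae_restrict_mem measurableSet_Ioi] with t ht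
      have ht1 : (1:ℝ) ≤ t := le_of_lt ht
      have ht0 : (0:ℝ) < t := lt_of_lt_of_le one_pos ht1
      have hts : (0:ℝ) ≤ t ^ (-s) := Real.rpow_nonneg ht0.le _
      rw [Real.norm_eq_abs, abs_of_nonneg (by positivity)]
      have hrw : t ^ (-s-1) = t ^ (-s) / t := by
        rw [Real.rpow_sub ht0, Real.rpow_one]
      rw [hrw]
      have h2 : (2*t+a)/(t^2+a^2) ≤ (2+a)/t := by
        rw [div_le_div_iff₀ (by positivity) ht0]
        nlinarith [mul_nonneg (mul_nonneg ha.le ht0.le) (sub_nonneg.mpr ht1),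
          mul_pos (mul_pos ha ha) ha, mul_pos ha ha]
      calc t^(-s) * ((2*t+a)/(t^2+a^2)) ≤ t^(-s) * ((2+a)/t) :=
            mul_le_mul_of_nonneg_left h2 hts
        _ = (2+a) * (t^(-s)/t) := by ring


-- step A: subordination representation
lemma mc_rep {s : ℝ} (hs1 : s < 1) {x : ℝ} (hx : 0 < x) :
    ∫ t in Ioi (0:ℝ), t ^ (-s) * Real.exp (-(x*t)) = Real.Gamma (1-s) * x ^ (s-1) := by
  have h := mc_integral_rpow_mul_exp (p := 1-s) (r := x) (by linarith) hx
  rw [show (1:ℝ)-s-1 = -s by ring, show -((1:ℝ)-s) = s-1 by ring] at h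
  rw [h, mul_comm]

-- H7: key Fubini identity
lemma mc_key {a s : ℝ} (ha : 0 < a) (hs0 : 0 < s) (hs1 : s < 1) {T : ℝ} (hT : 0 ≤ T) :
    ∫ x in (0:ℝ)..T, x ^ (s-1) * Real.cos (a*x)
      = (Real.Gamma (1-s))⁻¹ *
        ∫ t in Ioi (0:ℝ), t ^ (-s) *
          ((t + Real.exp (-(t*T)) * (a * Real.sin (a*T) - t * Real.cos (a*T))) / (t^2+a^2)) := by
  have hG : 0 < Real.Gamma (1-s) := Real.Gamma_pos_of_pos (by linarith)
  set f : ℝ → ℝ → ℝ := fun x t => t ^ (-s) * Real.exp (-(x*t)) * Real.cos (a*x) with hf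
  have hmeas : AEStronglyMeasurable (Function.uncurry f)
      ((volume.restrict (Ioc (0:ℝ) T)).prod (volume.restrict (Ioi (0:ℝ)))) := by
    apply Measurable.aestronglyMeasurable
    fun_prop
  have hslice : ∀ x : ℝ, 0 < x → IntegrableOn (fun t => f x t) (Ioi 0) := by
    intro x hx
    exact (mc_integrableOn_rpow_mul_exp (by linarith : (-1:ℝ) < -s) hx).mul_const _
  have hnorm : ∀ x : ℝ, 0 < x → ∫ t in Ioi (0:ℝ), ‖f x t‖ ≤ Real.Gamma (1-s) * x ^ (s-1) := by
    intro x hx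
    rw [← mc_rep hs1 hx]
    apply integral_mono_of_nonneg
    · filter_upwards with t using norm_nonneg _
    · exact mc_integrableOn_rpow_mul_exp (by linarith : (-1:ℝ) < -s) hx
    · filter_upwards [ae_restrict_mem measurableSet_Ioi] with t ht
      have ht0 : (0:ℝ) < t := ht
      have : ‖f x t‖ = t ^ (-s) * Real.exp (-(x*t)) * |Real.cos (a*x)| := by
        rw [hf]
        simp only [norm_mul, Real.norm_eq_abs, abs_of_nonneg (Real.rpow_nonneg ht0.le (-s)),
          abs_of_pos (Real.exp_pos _)]
      rw [this]
      calc t ^ (-s) * Real.exp (-(x*t)) * |Real.cos (a*x)|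
          ≤ t ^ (-s) * Real.exp (-(x*t)) * 1 := by
            apply mul_le_mul_of_nonneg_left (Real.abs_cos_le_one _) (by positivity)
        _ = t ^ (-s) * Real.exp (-(x*t)) := mul_one _
  have hint : Integrable (Function.uncurry f)
      ((volume.restrict (Ioc (0:ℝ) T)).prod (volume.restrict (Ioi (0:ℝ)))) := by
    rw [MeasureTheory.integrable_prod_iff hmeas]
    constructor
    · filter_upwards [ae_restrict_mem measurableSet_Ioc] with x hx
      exact hslice x hx.1
    · apply Integrable.mono' (g := fun x => Real.Gamma (1-s) * x ^ (s-1))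
      · apply Integrable.const_mul
        have h1 : IntervalIntegrable (fun x : ℝ => x ^ (s-1)) volume 0 T :=
          intervalIntegral.intervalIntegrable_rpow' (by linarith)
        exact (intervalIntegrable_iff_integrableOn_Ioc_of_le hT).mp h1
      · exact hmeas.norm.integral_prod_right'
      · filter_upwards [ae_restrict_mem measurableSet_Ioc] with x hx
        rw [Real.norm_eq_abs, abs_of_nonneg (integral_nonneg (fun t => norm_nonneg _))]
        exact hnorm x hx.1
  calc ∫ x in (0:ℝ)..T, x ^ (s-1) * Real.cos (a*x)
      = ∫ x in Ioc (0:ℝ) T, x ^ (s-1) * Real.cos (a*x) := intervalIntegral.integral_of_le hT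
    _ = ∫ x in Ioc (0:ℝ) T, (Real.Gamma (1-s))⁻¹ * ∫ t in Ioi (0:ℝ), f x t := by
        apply setIntegral_congr_fun measurableSet_Ioc
        intro x hx
        dsimp only
        have hx0 : (0:ℝ) < x := hx.1
        have : ∫ t in Ioi (0:ℝ), f x t
            = (∫ t in Ioi (0:ℝ), t ^ (-s) * Real.exp (-(x*t))) * Real.cos (a*x) := by
          rw [hf, ← MeasureTheory.integral_mul_const]
        rw [this, mc_rep hs1 hx0]
        field_simp
    _ = (Real.Gamma (1-s))⁻¹ * ∫ x in Ioc (0:ℝ) T, ∫ t in Ioi (0:ℝ), f x t :=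
        integral_const_mul _ _
    _ = (Real.Gamma (1-s))⁻¹ * ∫ t in Ioi (0:ℝ), ∫ x in Ioc (0:ℝ) T, f x t := by
        rw [MeasureTheory.integral_integral_swap hint]
    _ = (Real.Gamma (1-s))⁻¹ * ∫ t in Ioi (0:ℝ), t ^ (-s) *
          ((t + Real.exp (-(t*T)) * (a * Real.sin (a*T) - t * Real.cos (a*T))) / (t^2+a^2)) := by
        congr 1
        apply setIntegral_congr_fun measurableSet_Ioi
        intro t ht
        dsimp only
        have ht0 : (0:ℝ) < t := ht
        have hden : (0:ℝ) < t^2 + a^2 := by positivity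
        have h1 : ∫ x in Ioc (0:ℝ) T, f x t
            = t ^ (-s) * ∫ x in Ioc (0:ℝ) T, Real.exp (-(t*x)) * Real.cos (a*x) := by
          rw [hf, ← MeasureTheory.integral_const_mul]
          apply setIntegral_congr_fun measurableSet_Ioc
          intro x _
          simp only [mul_comm x t]
          ring
        rw [h1, ← intervalIntegral.integral_of_le hT, mc_integral_exp_cos t a hden T]


-- M: ∫ u^(-σ)/(1+u) = Γ(1-σ)Γ(σ)
lemma mc_M {σ : ℝ} (h0 : 0 < σ) (h1 : σ < 1) :
    ∫ u in Ioi (0:ℝ), u ^ (-σ) / (1+u) = Real.Gamma (1-σ) * Real.Gamma σ := by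
  set F : ℝ → ℝ → ℝ := fun u w => u ^ (-σ) * (Real.exp (-w) * Real.exp (-(u*w))) with hF
  have hmeas : AEStronglyMeasurable (Function.uncurry F)
      ((volume.restrict (Ioi (0:ℝ))).prod (volume.restrict (Ioi (0:ℝ)))) := by
    apply Measurable.aestronglyMeasurable; fun_prop
  have hone : ∀ u : ℝ, 0 < u →
      ∫ w in Ioi (0:ℝ), Real.exp (-w) * Real.exp (-(u*w)) = (1+u)⁻¹ := by
    intro u hu
    have h := mc_integral_rpow_mul_exp (p := 1) (r := 1+u) one_pos (by linarith)
    rw [show (1:ℝ)-1 = 0 by ring, Real.Gamma_one, mul_one, Real.rpow_neg_one] at h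
    rw [← h]
    apply setIntegral_congr_fun measurableSet_Ioi
    intro w _
    dsimp only
    rw [Real.rpow_zero, one_mul, ← Real.exp_add]
    ring_nf
  have hslice : ∀ w : ℝ, 0 < w → IntegrableOn (fun u => F u w) (Ioi 0) := by
    intro w hw
    have hI : IntegrableOn (fun u : ℝ => Real.exp (-w) * (u ^ (-σ) * Real.exp (-(w*u))))
        (Ioi 0) :=
      (mc_integrableOn_rpow_mul_exp (by linarith : (-1:ℝ) < -σ) hw).const_mul (Real.exp (-w))
    refine hI.congr_fun (fun u _ => ?_) measurableSet_Ioi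
    dsimp only [hF]
    rw [mul_comm w u]
    ring
  have hins : ∀ w : ℝ, 0 < w →
      ∫ u in Ioi (0:ℝ), F u w = Real.exp (-w) * (Real.Gamma (1-σ) * w ^ (σ-1)) := by
    intro w hw
    have hinner : ∫ u in Ioi (0:ℝ), F u w
        = Real.exp (-w) * ∫ u in Ioi (0:ℝ), u ^ (-σ) * Real.exp (-(w*u)) := by
      rw [← MeasureTheory.integral_const_mul]
      apply setIntegral_congr_fun measurableSet_Ioi
      intro u _
      dsimp only [hF]
      rw [mul_comm w u]
      ring
    rw [hinner, mc_rep h1 hw]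
  have hnorm : ∀ w : ℝ, 0 < w →
      ∫ u in Ioi (0:ℝ), ‖F u w‖ = Real.exp (-w) * (Real.Gamma (1-σ) * w ^ (σ-1)) := by
    intro w hw
    rw [← hins w hw]
    apply setIntegral_congr_fun measurableSet_Ioi
    intro u hu
    have hu0 : (0:ℝ) < u := hu
    dsimp only [hF]
    rw [Real.norm_eq_abs, abs_of_nonneg (by positivity)]
  have hint : Integrable (Function.uncurry F)
      ((volume.restrict (Ioi (0:ℝ))).prod (volume.restrict (Ioi (0:ℝ)))) := by
    rw [MeasureTheory.integrable_prod_iff' hmeas]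
    constructor
    · filter_upwards [ae_restrict_mem measurableSet_Ioi] with w hw
      exact hslice w hw
    · have hg : IntegrableOn (fun w : ℝ => Real.exp (-w) * (Real.Gamma (1-σ) * w ^ (σ-1)))
          (Ioi 0) := by
        have hI : IntegrableOn (fun w : ℝ => Real.Gamma (1-σ) * (Real.exp (-w) * w ^ (σ-1)))
            (Ioi 0) := (Real.GammaIntegral_convergent h0).const_mul (Real.Gamma (1-σ))
        refine hI.congr_fun (fun w _ => ?_) measurableSet_Ioi
        ring
      refine hg.congr ?_
      filter_upwards [ae_restrict_mem measurableSet_Ioi] with w hw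
      exact (hnorm w hw).symm
  calc ∫ u in Ioi (0:ℝ), u ^ (-σ) / (1+u)
      = ∫ u in Ioi (0:ℝ), ∫ w in Ioi (0:ℝ), F u w := by
        apply setIntegral_congr_fun measurableSet_Ioi
        intro u hu
        have hu0 : (0:ℝ) < u := hu
        dsimp only [hF]
        rw [MeasureTheory.integral_const_mul, hone u hu0, div_eq_mul_inv]
    _ = ∫ w in Ioi (0:ℝ), ∫ u in Ioi (0:ℝ), F u w :=
        MeasureTheory.integral_integral_swap hint
    _ = ∫ w in Ioi (0:ℝ), Real.Gamma (1-σ) * (w ^ (σ-1) * Real.exp (-(1*w))) := by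
        apply setIntegral_congr_fun measurableSet_Ioi
        intro w hw
        dsimp only
        rw [hins w hw, one_mul]
        ring
    _ = Real.Gamma (1-σ) * Real.Gamma σ := by
        rw [MeasureTheory.integral_const_mul, mc_integral_rpow_mul_exp h0 one_pos, Real.one_rpow, one_mul]


lemma mc_value {a s : ℝ} (ha : 0 < a) (hs0 : 0 < s) (hs1 : s < 1) :
    ∫ t in Ioi (0:ℝ), t ^ (-s) * (t / (t^2+a^2))
      = a ^ (-s) * (Real.Gamma (1-s/2) * Real.Gamma (s/2) / 2) := by
  have hM := mc_M (σ := s/2) (by linarith) (by linarith)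
  have h2 := MeasureTheory.integral_comp_rpow_Ioi_of_pos
      (g := fun u : ℝ => (1/2) * (u ^ (-(s/2)) / (1+u))) (p := 2) two_pos
  have hKL : ∫ x in Ioi (0:ℝ),
        ((2:ℝ) * x ^ ((2:ℝ)-1)) • ((1/2) * ((x ^ (2:ℝ)) ^ (-(s/2)) / (1 + x ^ (2:ℝ))))
      = ∫ v in Ioi (0:ℝ), v ^ (1-s) / (v^2+1) := by
    apply setIntegral_congr_fun measurableSet_Ioi
    intro v hv
    have hv0 : (0:ℝ) < v := hv
    have e1 : v ^ ((2:ℝ)-1) = v := by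
      rw [show (2:ℝ)-1 = 1 by norm_num, Real.rpow_one]
    have e2 : v ^ (2:ℝ) = v^2 := by
      rw [show ((2:ℝ)) = ((2:ℕ):ℝ) by norm_num, Real.rpow_natCast]
    have e3 : (v ^ (2:ℝ)) ^ (-(s/2)) = v ^ (-s) := by
      rw [← Real.rpow_mul hv0.le, show (2:ℝ) * -(s/2) = -s by ring]
    have e4 : v ^ (1-s) = v * v ^ (-s) := by
      rw [show (1:ℝ)-s = 1 + -s by ring, Real.rpow_add hv0, Real.rpow_one]
    dsimp only
    rw [smul_eq_mul, e1, e3, e2, e4]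
    ring
  have hK : ∫ v in Ioi (0:ℝ), v ^ (1-s) / (v^2+1)
      = Real.Gamma (1-s/2) * Real.Gamma (s/2) / 2 := by
    rw [← hKL, h2, MeasureTheory.integral_const_mul, hM]
    ring
  have hg := MeasureTheory.integral_comp_mul_left_Ioi
    (g := fun t : ℝ => t ^ (1-s) / (t^2+a^2)) 0 ha
  rw [mul_zero, smul_eq_mul] at hg
  have hgl : ∫ x in Ioi (0:ℝ), (fun t : ℝ => t ^ (1-s) / (t^2+a^2)) (a*x)
      = a ^ (-1-s) * (Real.Gamma (1-s/2) * Real.Gamma (s/2) / 2) := by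
    rw [← hK, ← MeasureTheory.integral_const_mul]
    apply setIntegral_congr_fun measurableSet_Ioi
    intro x hx
    have hx0 : (0:ℝ) < x := hx
    dsimp only
    rw [Real.mul_rpow ha.le hx0.le]
    have ea : a ^ ((1:ℝ)-s) = a ^ (-1-s) * a^2 := by
      rw [show (1:ℝ)-s = (-1-s) + ((2:ℕ):ℝ) by push_cast; ring, Real.rpow_add ha,
        Real.rpow_natCast]
    rw [ea]
    have hden : (a*x)^2 + a^2 = a^2 * (x^2+1) := by ring
    rw [hden]
    field_simp
  rw [hgl] at hg
  have haa : a * a ^ (-1-s) = a ^ (-s) := by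
    nth_rewrite 1 [← Real.rpow_one a]
    rw [← Real.rpow_add ha, show (1:ℝ) + (-1-s) = -s by ring]
  have hJ : ∫ x in Ioi (0:ℝ), x ^ (1-s) / (x^2+a^2)
      = a ^ (-s) * (Real.Gamma (1-s/2) * Real.Gamma (s/2) / 2) := by
    have := congrArg (fun z => a * z) hg
    rw [← mul_assoc a, haa, ← mul_assoc, mul_inv_cancel₀ ha.ne', one_mul] at this
    exact this.symm
  rw [← hJ]
  apply setIntegral_congr_fun measurableSet_Ioi
  intro t ht
  have ht0 : (0:ℝ) < t := ht
  have e4 : t ^ ((1:ℝ)-s) = t * t ^ (-s) := by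
    rw [show (1:ℝ)-s = 1 + -s by ring, Real.rpow_add ht0, Real.rpow_one]
  dsimp only
  rw [e4]
  ring


theorem mellin_cos (a s : ℝ) (ha : 0 < a) (hs0 : 0 < s) (hs1 : s < 1) :
    Tendsto (fun T : ℝ => ∫ x in (0 : ℝ)..T, x ^ (s - 1) * Real.cos (a * x)) atTop
      (𝓝 (a ^ (-s) * Real.Gamma s * Real.cos (Real.pi * s / 2))) := by
  have hG : 0 < Real.Gamma (1-s) := Real.Gamma_pos_of_pos (by linarith)
  set F : ℝ → ℝ → ℝ := fun T t => t ^ (-s) *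
    ((t + Real.exp (-(t*T)) * (a * Real.sin (a*T) - t * Real.cos (a*T))) / (t^2+a^2)) with hFdef
  have hDCT : Tendsto (fun T => ∫ t in Ioi (0:ℝ), F T t) atTop
      (𝓝 (∫ t in Ioi (0:ℝ), t ^ (-s) * (t/(t^2+a^2)))) := by
    apply MeasureTheory.tendsto_integral_filter_of_dominated_convergence
      (bound := fun t => t ^ (-s) * ((2*t+a)/(t^2+a^2)))
    · filter_upwards with T
      apply ContinuousOn.aestronglyMeasurable _ measurableSet_Ioi
      apply (mc_contOn s).mul
      apply ContinuousOn.div (by fun_prop) (by fun_prop)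
      intro t ht
      have ht0 : (0:ℝ) < t := ht
      positivity
    · filter_upwards [eventually_ge_atTop (0:ℝ)] with T hT
      filter_upwards [ae_restrict_mem measurableSet_Ioi] with t ht
      have ht0 : (0:ℝ) < t := ht
      have hnn : (0:ℝ) ≤ t ^ (-s) := Real.rpow_nonneg ht0.le _
      rw [hFdef]
      dsimp only
      rw [Real.norm_eq_abs, abs_mul, abs_of_nonneg hnn]
      exact mul_le_mul_of_nonneg_left (mc_bound ha ht0 hT) hnn
    · exact mc_dom_integrable ha hs0 hs1
    · filter_upwards [ae_restrict_mem measurableSet_Ioi] with t ht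
      have ht0 : (0:ℝ) < t := ht
      exact Tendsto.const_mul _ (mc_ptlimit ha ht0)
  have hval : (Real.Gamma (1-s))⁻¹ * ∫ t in Ioi (0:ℝ), t ^ (-s) * (t/(t^2+a^2))
      = a ^ (-s) * Real.Gamma s * Real.cos (Real.pi * s / 2) := by
    rw [mc_value ha hs0 hs1]
    have hπ : 0 < Real.pi := Real.pi_pos
    have e1 : Real.Gamma (1-s/2) * Real.Gamma (s/2)
        = Real.pi / Real.sin (Real.pi * s / 2) := by
      have h := Real.Gamma_mul_Gamma_one_sub (s/2)
      rw [show Real.pi * (s/2) = Real.pi * s / 2 by ring] at h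
      rw [mul_comm, h]
    have e2 := Real.Gamma_mul_Gamma_one_sub s
    have hsin2 : Real.sin (Real.pi*s) = 2 * Real.sin (Real.pi*s/2) * Real.cos (Real.pi*s/2) := by
      have h := Real.sin_two_mul (Real.pi*s/2)
      rw [show 2*(Real.pi*s/2) = Real.pi*s by ring] at h
      exact h
    have hs2pos : 0 < Real.sin (Real.pi*s/2) :=
      Real.sin_pos_of_pos_of_lt_pi (by positivity) (by nlinarith)
    have hcos : 0 < Real.cos (Real.pi*s/2) := by
      apply Real.cos_pos_of_mem_Ioo
      constructor
      · nlinarith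
      · nlinarith
    have key : Real.Gamma (1-s) * (a ^ (-s) * Real.Gamma s * Real.cos (Real.pi*s/2))
        = a ^ (-s) * (Real.pi / Real.sin (Real.pi*s/2) / 2) := by
      calc Real.Gamma (1-s) * (a ^ (-s) * Real.Gamma s * Real.cos (Real.pi*s/2))
          = a ^ (-s) * ((Real.Gamma s * Real.Gamma (1-s)) * Real.cos (Real.pi*s/2)) := by ring
        _ = a ^ (-s) * ((Real.pi / Real.sin (Real.pi*s)) * Real.cos (Real.pi*s/2)) := by rw [e2]
        _ = a ^ (-s) * (Real.pi / Real.sin (Real.pi*s/2) / 2) := by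
            rw [hsin2]
            congr 1
            rw [div_div, eq_div_iff (mul_pos hs2pos two_pos).ne', div_mul_eq_mul_div,
              div_mul_eq_mul_div, div_eq_iff (mul_pos (mul_pos two_pos hs2pos) hcos).ne']
            ring
    rw [e1, ← key, ← mul_assoc, inv_mul_cancel₀ hG.ne', one_mul]
  rw [← hval]
  apply Tendsto.congr' _ (hDCT.const_mul _)
  filter_upwards [eventually_ge_atTop (0:ℝ)] with T hT
  exact (mc_key ha hs0 hs1 hT).symm
end

section
/- For real s with 0 < s < 1, ∫₀^∞ x^{s-1} e^{x} Γ(0, x) dx = (π / sin(π s)) · Γ(s), where Γ(0,x) = ∫_x^∞ e^{-t}/t dt is the incomplete Gamma function. -/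
open MeasureTheory Set

/-- The upper incomplete Gamma function at parameter `0`: `Γ(0,x) = ∫_x^∞ e^{-t}/t dt`. -/
noncomputable def incGamma0 (x : ℝ) : ℝ := ∫ t in Ioi x, Real.exp (-t) / t

section aux

open Real

/-- Tonelli-type swap for nonnegative functions on `Ioi 0 × Ioi 0`. -/
lemma swap_helper (f : ℝ → ℝ → ℝ)
    (hf : Measurable (Function.uncurry f))
    (hpos : ∀ x ∈ Ioi (0:ℝ), ∀ y ∈ Ioi (0:ℝ), 0 ≤ f x y)
    (hint1 : ∀ x ∈ Ioi (0:ℝ), IntegrableOn (f x) (Ioi 0))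
    (hint2 : ∀ y ∈ Ioi (0:ℝ), IntegrableOn (fun x => f x y) (Ioi 0)) :
    ∫ x in Ioi (0:ℝ), ∫ y in Ioi (0:ℝ), f x y
      = ∫ y in Ioi (0:ℝ), ∫ x in Ioi (0:ℝ), f x y := by
  have key : ∀ (g : ℝ → ℝ → ℝ), Measurable (Function.uncurry g) →
      (∀ x ∈ Ioi (0:ℝ), ∀ y ∈ Ioi (0:ℝ), 0 ≤ g x y) →
      (∀ x ∈ Ioi (0:ℝ), IntegrableOn (g x) (Ioi 0)) →
      ∫ x in Ioi (0:ℝ), ∫ y in Ioi (0:ℝ), g x y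
        = (∫⁻ x in Ioi (0:ℝ), ∫⁻ y in Ioi (0:ℝ), ENNReal.ofReal (g x y)).toReal := by
    intro g hg hgpos hgint
    have hmx : ∀ x : ℝ, Measurable (g x) := fun x =>
      hg.comp (measurable_const.prodMk measurable_id)
    have step1 : ∀ x ∈ Ioi (0:ℝ),
        ∫ y in Ioi (0:ℝ), g x y = (∫⁻ y in Ioi (0:ℝ), ENNReal.ofReal (g x y)).toReal := by
      intro x hx
      refine integral_eq_lintegral_of_nonneg_ae ?_ (hmx x).aestronglyMeasurable
      exact (ae_restrict_iff' measurableSet_Ioi).2 (ae_of_all _ (hgpos x hx))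
    have hG : Measurable fun x => ∫ y in Ioi (0:ℝ), g x y :=
      (hg.stronglyMeasurable.integral_prod_right).measurable
    have step2 : ∫ x in Ioi (0:ℝ), ∫ y in Ioi (0:ℝ), g x y
        = (∫⁻ x in Ioi (0:ℝ), ENNReal.ofReal (∫ y in Ioi (0:ℝ), g x y)).toReal := by
      refine integral_eq_lintegral_of_nonneg_ae ?_ hG.aestronglyMeasurable
      refine (ae_restrict_iff' measurableSet_Ioi).2 (ae_of_all _ fun x hx => ?_)
      exact setIntegral_nonneg measurableSet_Ioi (hgpos x hx)
    rw [step2]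
    congr 1
    refine lintegral_congr_ae ?_
    refine (ae_restrict_iff' measurableSet_Ioi).2 (ae_of_all _ fun x hx => ?_)
    dsimp only
    rw [step1 x hx]
    have hfin : (∫⁻ y in Ioi (0:ℝ), ENNReal.ofReal (g x y)) < ⊤ := by
      have := (hgint x hx).hasFiniteIntegral
      refine lt_of_le_of_lt (lintegral_mono fun y => ?_) this
      exact ENNReal.ofReal_le_of_le_toReal (by
        simpa [Real.norm_eq_abs] using le_abs_self (g x y))
    rw [ENNReal.ofReal_toReal hfin.ne]
  have hswap : (∫⁻ x in Ioi (0:ℝ), ∫⁻ y in Ioi (0:ℝ), ENNReal.ofReal (f x y))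
      = ∫⁻ y in Ioi (0:ℝ), ∫⁻ x in Ioi (0:ℝ), ENNReal.ofReal (f x y) := by
    refine lintegral_lintegral_swap ?_
    exact (ENNReal.measurable_ofReal.comp hf).aemeasurable
  rw [key f hf hpos hint1, hswap,
    key (fun y x => f x y) (hf.comp measurable_swap) (fun y hy x hx => hpos x hx y hy) hint2]

lemma integrableOn_rpow_exp {a b : ℝ} (ha : 0 < a) (hb : 0 < b) :
    IntegrableOn (fun y : ℝ => y ^ (a - 1) * Real.exp (-(b * y))) (Ioi 0) := by
  have h := integrableOn_rpow_mul_exp_neg_mul_rpow (p := 1) (s := a - 1) (b := b)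
    (by linarith) one_pos hb
  refine h.congr_fun (fun y hy => ?_) measurableSet_Ioi
  dsimp only
  rw [Real.rpow_one, neg_mul]

set_option maxHeartbeats 1000000 in
lemma beta_eval {s : ℝ} (hs0 : 0 < s) (hs1 : s < 1) :
    ∫ y in Ioi (0:ℝ), y ^ (s - 1) / (1 + y) = Real.Gamma s * Real.Gamma (1 - s) := by
  have h1s : 0 < 1 - s := by linarith
  set f : ℝ → ℝ → ℝ := fun y b => y ^ (s - 1) * Real.exp (-((1 + y) * b)) with hfdef
  have hfm : Measurable (Function.uncurry f) := by
    simp only [hfdef, Function.uncurry]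
    fun_prop
  have hpos : ∀ y ∈ Ioi (0:ℝ), ∀ b ∈ Ioi (0:ℝ), 0 ≤ f y b := fun y hy b hb => by
    have hy0 : (0:ℝ) < y := hy
    simp only [hfdef]
    positivity
  have hint1 : ∀ y ∈ Ioi (0:ℝ), IntegrableOn (f y) (Ioi 0) := by
    intro y hy
    have h1y : (0:ℝ) < 1 + y := by have : (0:ℝ) < y := hy; linarith
    have hbase : IntegrableOn (fun b : ℝ => Real.exp (-((1 + y) * b))) (Ioi 0) :=
      (exp_neg_integrableOn_Ioi 0 h1y).congr_fun (fun b _ => by dsimp only; rw [neg_mul])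
        measurableSet_Ioi
    exact hbase.const_mul _
  have hint2 : ∀ b ∈ Ioi (0:ℝ), IntegrableOn (fun y => f y b) (Ioi 0) := by
    intro b hb
    have hb' : (0:ℝ) < b := hb
    have hbase : IntegrableOn
        (fun y : ℝ => y ^ (s - 1) * Real.exp (-(b * y)) * Real.exp (-b)) (Ioi 0) :=
      (integrableOn_rpow_exp hs0 hb').mul_const (Real.exp (-b))
    refine hbase.congr_fun (fun y _ => ?_) measurableSet_Ioi
    simp only [hfdef]
    rw [mul_assoc, ← Real.exp_add]
    congr 2
    ring
  have inner1 : ∀ y ∈ Ioi (0:ℝ), ∫ b in Ioi (0:ℝ), f y b = y ^ (s - 1) / (1 + y) := by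
    intro y hy
    have h1y : (0:ℝ) < 1 + y := by have : (0:ℝ) < y := hy; linarith
    have hI : ∫ b in Ioi (0:ℝ), Real.exp (-((1 + y) * b)) = (1 + y)⁻¹ := by
      have h := integral_comp_mul_left_Ioi (fun x => Real.exp (-x)) 0 h1y
      simpa [integral_exp_neg_Ioi, integral_exp_Iic_zero] using h
    simp only [hfdef]
    rw [MeasureTheory.integral_const_mul, hI, div_eq_mul_inv]
  have inner2 : ∀ b ∈ Ioi (0:ℝ), ∫ y in Ioi (0:ℝ), f y b
      = Real.Gamma s * (b ^ ((1 - s) - 1) * Real.exp (-(1 * b))) := by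
    intro b hb
    have hb' : (0:ℝ) < b := hb
    have heq : ∀ y ∈ Ioi (0:ℝ), f y b
        = Real.exp (-b) * (y ^ (s - 1) * Real.exp (-(b * y))) := by
      intro y _
      simp only [hfdef]
      rw [mul_comm (Real.exp (-b)), mul_assoc, ← Real.exp_add]
      congr 2
      ring
    rw [setIntegral_congr_fun measurableSet_Ioi heq, MeasureTheory.integral_const_mul,
      Real.integral_rpow_mul_exp_neg_mul_Ioi hs0 hb']
    have h1 : ((1:ℝ) / b) ^ s = b ^ ((1 - s) - 1) := by
      rw [one_div, Real.inv_rpow hb'.le, ← Real.rpow_neg hb'.le,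
        show -s = 1 - s - 1 by ring]
    rw [h1, one_mul]
    ring
  calc ∫ y in Ioi (0:ℝ), y ^ (s - 1) / (1 + y)
      = ∫ y in Ioi (0:ℝ), ∫ b in Ioi (0:ℝ), f y b :=
        (setIntegral_congr_fun measurableSet_Ioi inner1).symm
    _ = ∫ b in Ioi (0:ℝ), ∫ y in Ioi (0:ℝ), f y b := swap_helper f hfm hpos hint1 hint2
    _ = ∫ b in Ioi (0:ℝ), Real.Gamma s * (b ^ ((1 - s) - 1) * Real.exp (-(1 * b))) :=
        setIntegral_congr_fun measurableSet_Ioi inner2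
    _ = Real.Gamma s * Real.Gamma (1 - s) := by
        rw [MeasureTheory.integral_const_mul,
          Real.integral_rpow_mul_exp_neg_mul_Ioi h1s one_pos]
        norm_num

lemma int_rpow_div {s : ℝ} (hs0 : 0 < s) (hs1 : s < 1) {u : ℝ} (hu : 0 < u) :
    IntegrableOn (fun x : ℝ => x ^ (s - 1) / (x + u)) (Ioi 0) := by
  have hmeas : Measurable fun x : ℝ => x ^ (s - 1) / (x + u) := by fun_prop
  have h1 : IntegrableOn (fun x : ℝ => x ^ (s - 1) / (x + u)) (Ioo 0 1) := by
    have hb : IntegrableOn (fun x : ℝ => x ^ (s - 1) * u⁻¹) (Ioo 0 1) :=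
      ((intervalIntegral.integrableOn_Ioo_rpow_iff one_pos).2 (by linarith)).mul_const _
    refine hb.mono' hmeas.aestronglyMeasurable ?_
    refine (ae_restrict_iff' measurableSet_Ioo).2 (ae_of_all _ fun x hx => ?_)
    have hx0 : (0:ℝ) < x := hx.1
    rw [Real.norm_eq_abs, abs_of_nonneg (by positivity), ← div_eq_mul_inv]
    exact div_le_div_of_nonneg_left (by positivity) hu (by linarith)
  have h2 : IntegrableOn (fun x : ℝ => x ^ (s - 1) / (x + u)) (Ioi 1) := by
    have hb : IntegrableOn (fun x : ℝ => x ^ (s - 2)) (Ioi 1) :=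
      integrableOn_Ioi_rpow_of_lt (by linarith) one_pos
    refine hb.mono' hmeas.aestronglyMeasurable ?_
    refine (ae_restrict_iff' measurableSet_Ioi).2 (ae_of_all _ fun x hx => ?_)
    have hx1 : (1:ℝ) < x := hx
    have hx0 : (0:ℝ) < x := by linarith
    rw [Real.norm_eq_abs, abs_of_nonneg (by positivity)]
    have hxx : x ^ (s - 2) = x ^ (s - 1) / x := by
      rw [show s - 2 = (s - 1) - 1 by ring, Real.rpow_sub hx0, Real.rpow_one]
    rw [hxx]
    exact div_le_div_of_nonneg_left (by positivity) hx0 (by linarith)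
  rw [show Ioi (0:ℝ) = Ioc 0 1 ∪ Ioi 1 from (Ioc_union_Ioi_eq_Ioi one_pos.le).symm]
  exact (h1.congr_set_ae Ioo_ae_eq_Ioc.symm).union h2

lemma inner_eval {s : ℝ} (hs0 : 0 < s) (hs1 : s < 1) {u : ℝ} (hu : 0 < u) :
    ∫ x in Ioi (0:ℝ), x ^ (s - 1) / (x + u)
      = u ^ (s - 1) * (Real.Gamma s * Real.Gamma (1 - s)) := by
  have h : ∫ y in Ioi (0:ℝ), (u * y) ^ (s - 1) / (u * y + u)
      = u⁻¹ * ∫ x in Ioi (0:ℝ), x ^ (s - 1) / (x + u) := by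
    simpa using integral_comp_mul_left_Ioi (fun x => x ^ (s - 1) / (x + u)) 0 hu
  have h2 : ∫ y in Ioi (0:ℝ), (u * y) ^ (s - 1) / (u * y + u)
      = u ^ (s - 2) * (Real.Gamma s * Real.Gamma (1 - s)) := by
    rw [← beta_eval hs0 hs1, ← MeasureTheory.integral_const_mul]
    refine setIntegral_congr_fun measurableSet_Ioi fun y hy => ?_
    have hy0 : (0:ℝ) < y := hy
    rw [Real.mul_rpow hu.le hy0.le, show u * y + u = u * (1 + y) by ring,
      show u ^ (s - 2) = u ^ (s - 1) * u⁻¹ by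
        rw [show s - 2 = (s - 1) + (-1) by ring, Real.rpow_add hu, Real.rpow_neg_one]]
    have h1y : (0:ℝ) < 1 + y := by linarith
    field_simp
  have h3 : ∫ x in Ioi (0:ℝ), x ^ (s - 1) / (x + u)
      = u * (u ^ (s - 2) * (Real.Gamma s * Real.Gamma (1 - s))) := by
    rw [← h2, h, ← mul_assoc, mul_inv_cancel₀ hu.ne', one_mul]
  rw [h3, ← mul_assoc, show (u:ℝ) * u ^ (s - 2) = u ^ (s - 1) from by
    rw [show s - 1 = 1 + (s - 2) by ring, Real.rpow_add hu, Real.rpow_one]]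

lemma exp_mul_incGamma0 (x : ℝ) :
    Real.exp x * incGamma0 x = ∫ u in Ioi (0:ℝ), Real.exp (-u) / (x + u) := by
  have hmp : MeasurePreserving (fun u : ℝ => u + x) volume volume :=
    measurePreserving_add_right volume x
  have hemb : MeasurableEmbedding (fun u : ℝ => u + x) :=
    (Homeomorph.addRight x).measurableEmbedding
  have h := hmp.setIntegral_preimage_emb hemb (fun t => Real.exp (-t) / t) (Ioi x)
  have hpre : (fun u : ℝ => u + x) ⁻¹' Ioi x = Ioi 0 := by
    ext u; simp [lt_add_iff_pos_left]
  rw [hpre] at h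
  rw [incGamma0, ← h, ← MeasureTheory.integral_const_mul]
  refine setIntegral_congr_fun measurableSet_Ioi fun u _ => ?_
  rw [← mul_div_assoc, ← Real.exp_add, show x + -(u + x) = -u by ring, add_comm u x]

lemma int_exp_div {x : ℝ} (hx : 0 < x) :
    IntegrableOn (fun u : ℝ => Real.exp (-u) / (x + u)) (Ioi 0) := by
  have hb : IntegrableOn (fun u : ℝ => Real.exp (-u) * x⁻¹) (Ioi 0) := by
    have hbase : IntegrableOn (fun u : ℝ => Real.exp (-1 * u) * x⁻¹) (Ioi 0) :=
      (exp_neg_integrableOn_Ioi 0 one_pos).mul_const x⁻¹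
    exact hbase.congr_fun (fun u _ => by dsimp only; rw [neg_one_mul]) measurableSet_Ioi
  have hmeas : Measurable fun u : ℝ => Real.exp (-u) / (x + u) := by fun_prop
  refine hb.mono' hmeas.aestronglyMeasurable ?_
  refine (ae_restrict_iff' measurableSet_Ioi).2 (ae_of_all _ fun u hu => ?_)
  have hu0 : (0:ℝ) < u := hu
  rw [Real.norm_eq_abs, abs_of_nonneg (by positivity), ← div_eq_mul_inv]
  exact div_le_div_of_nonneg_left (Real.exp_pos _).le hx (by linarith)

end aux

set_option maxHeartbeats 1000000 in
theorem mellin_exp_incGamma (s : ℝ) (hs0 : 0 < s) (hs1 : s < 1) :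
    (∫ x in Ioi (0 : ℝ), x ^ (s - 1) * Real.exp x * incGamma0 x) =
      Real.pi / Real.sin (Real.pi * s) * Real.Gamma s := by
  have h1s : 0 < 1 - s := by linarith
  set f : ℝ → ℝ → ℝ := fun x u => x ^ (s - 1) * (Real.exp (-u) / (x + u)) with hfdef
  have hfm : Measurable (Function.uncurry f) := by
    simp only [hfdef, Function.uncurry]
    fun_prop
  have hpos : ∀ x ∈ Ioi (0:ℝ), ∀ u ∈ Ioi (0:ℝ), 0 ≤ f x u := fun x hx u hu => by
    have hx0 : (0:ℝ) < x := hx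
    have hu0 : (0:ℝ) < u := hu
    simp only [hfdef]
    positivity
  have hint1 : ∀ x ∈ Ioi (0:ℝ), IntegrableOn (f x) (Ioi 0) := fun x hx =>
    (int_exp_div (show (0:ℝ) < x from hx)).const_mul _
  have hint2 : ∀ u ∈ Ioi (0:ℝ), IntegrableOn (fun x => f x u) (Ioi 0) := by
    intro u hu
    have hbase : IntegrableOn
        (fun x : ℝ => x ^ (s - 1) / (x + u) * Real.exp (-u)) (Ioi 0) :=
      (int_rpow_div hs0 hs1 (show (0:ℝ) < u from hu)).mul_const (Real.exp (-u))
    refine hbase.congr_fun (fun x _ => ?_) measurableSet_Ioi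
    simp only [hfdef]
    ring
  have step1 : (∫ x in Ioi (0 : ℝ), x ^ (s - 1) * Real.exp x * incGamma0 x)
      = ∫ x in Ioi (0:ℝ), ∫ u in Ioi (0:ℝ), f x u := by
    refine setIntegral_congr_fun measurableSet_Ioi fun x _ => ?_
    rw [mul_assoc, exp_mul_incGamma0 x, ← MeasureTheory.integral_const_mul]
  have inner2 : ∀ u ∈ Ioi (0:ℝ), ∫ x in Ioi (0:ℝ), f x u
      = (Real.Gamma s * Real.Gamma (1 - s)) * (u ^ (s - 1) * Real.exp (-(1 * u))) := by
    intro u hu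
    have hu0 : (0:ℝ) < u := hu
    have heq : ∀ x ∈ Ioi (0:ℝ), f x u
        = Real.exp (-u) * (x ^ (s - 1) / (x + u)) := by
      intro x _
      simp only [hfdef]
      ring
    rw [setIntegral_congr_fun measurableSet_Ioi heq, MeasureTheory.integral_const_mul,
      inner_eval hs0 hs1 hu0, one_mul]
    ring
  calc (∫ x in Ioi (0 : ℝ), x ^ (s - 1) * Real.exp x * incGamma0 x)
      = ∫ x in Ioi (0:ℝ), ∫ u in Ioi (0:ℝ), f x u := step1
    _ = ∫ u in Ioi (0:ℝ), ∫ x in Ioi (0:ℝ), f x u := swap_helper f hfm hpos hint1 hint2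
    _ = ∫ u in Ioi (0:ℝ), (Real.Gamma s * Real.Gamma (1 - s))
          * (u ^ (s - 1) * Real.exp (-(1 * u))) :=
        setIntegral_congr_fun measurableSet_Ioi inner2
    _ = Real.pi / Real.sin (Real.pi * s) * Real.Gamma s := by
        rw [MeasureTheory.integral_const_mul,
          Real.integral_rpow_mul_exp_neg_mul_Ioi hs0 one_pos,
          ← Real.Gamma_mul_Gamma_one_sub s]
        norm_num [Real.one_rpow]
end
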